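/- arXiv:1904.09872 — 4 statements merged into one kernel-verified Lean document; each statement's English description precedes it below -/
import Mathlib

section
/- Let L ≥ 1, and for each layer ℓ ∈ Fin L let C_ℓ, m_ℓ ≥ 1. Let A be the finite set of all network configurations a = (a_1, …, a_L) where each a_ℓ : Fin m_ℓ → ℕ satisfies ∑_k a_{ℓ,k} = C_ℓ. Let ℒ : A → ℝ be an arbitrary loss function, define p(a | α) = ∏_ℓ (C_ℓ! / ∏_k a_{ℓ,k}!) · exp(∑_k α_{ℓ,k} · a_{ℓ,k}) / (∑_j exp(α_{ℓ,j}))^{C_ℓ}, and define the expected loss J(α) = ∑_{a ∈ A} p(a | α) · ℒ(a). Then for every layer ℓ, every t : Fin m_ℓ, and every parameter collection α, the partial derivative of J with respect to the coordinate α_{ℓ,t} exists and equals ∑_{a ∈ A} ℒ(a) · (a_{ℓ,t} − C_ℓ · p_{ℓ,t}(α_ℓ)) · p(a | α), where p_{ℓ,t}(α_ℓ) = exp(α_{ℓ,t}) / ∑_j exp(α_{ℓ,j}). -/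
open Finset

/-- The multinomial probability of a layer configuration `a` with `Cl` filters and
`ml` operations, written via softmax parameters `α`. -/
noncomputable def layerProb (Cl ml : ℕ) (a : Fin ml → ℕ) (α : Fin ml → ℝ) : ℝ :=
  ((Cl.factorial : ℝ) / ∏ k, ((a k).factorial : ℝ)) *
    Real.exp (∑ k, α k * (a k)) / (∑ j, Real.exp (α j)) ^ Cl

/-- The network configuration probability: the product of the layer probabilities. -/
noncomputable def netProb (L : ℕ) (C m : Fin L → ℕ)
    (a : (ℓ : Fin L) → Fin (m ℓ) → ℕ) (α : (ℓ : Fin L) → Fin (m ℓ) → ℝ) : ℝ :=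
  ∏ r, layerProb (C r) (m r) (a r) (α r)

lemma layerProb_hasDerivAt (Cl ml : ℕ) (a : Fin ml → ℕ) (β : Fin ml → ℝ) (t : Fin ml) :
    HasDerivAt (fun s => layerProb Cl ml a (Function.update β t s))
      (((a t : ℝ) - (Cl : ℝ) * (Real.exp (β t) / ∑ j, Real.exp (β j))) *
        layerProb Cl ml a β) (β t) := by
  set D : ℝ := ∑ j ∈ univ.erase t, Real.exp (β j) with hD
  set c : ℝ := ∑ k ∈ univ.erase t, β k * (a k) with hc
  set K : ℝ := ((Cl.factorial : ℝ) / ∏ k, ((a k).factorial : ℝ)) with hK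
  have hDnn : 0 ≤ D := Finset.sum_nonneg fun j _ => (Real.exp_pos _).le
  have hsum : ∀ s : ℝ, ∑ j, Real.exp (Function.update β t s j) = Real.exp s + D := by
    intro s
    rw [← Finset.add_sum_erase _ _ (mem_univ t), Function.update_self]
    congr 1
    exact Finset.sum_congr rfl fun j hj => by
      rw [Function.update_of_ne (Finset.ne_of_mem_erase hj)]
  have hsum2 : ∀ s : ℝ, ∑ k, Function.update β t s k * (a k : ℝ) = s * a t + c := by
    intro s
    rw [← Finset.add_sum_erase _ _ (mem_univ t), Function.update_self]
    congr 1
    exact Finset.sum_congr rfl fun j hj => by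
      rw [Function.update_of_ne (Finset.ne_of_mem_erase hj)]
  have hfun : (fun s => layerProb Cl ml a (Function.update β t s)) =
      fun s => K * Real.exp (s * a t + c) / (Real.exp s + D) ^ Cl := by
    funext s
    rw [layerProb, hsum, hsum2]
  have hEpos : (0:ℝ) < Real.exp (β t) + D := by positivity
  set s₀ := β t
  have h1 : HasDerivAt (fun s : ℝ => Real.exp (s * a t + c))
      (Real.exp (s₀ * a t + c) * (a t : ℝ)) s₀ := by
    have := (((hasDerivAt_id s₀).mul_const (a t : ℝ)).add_const c).exp
    simpa using this
  have h2 : HasDerivAt (fun s : ℝ => (Real.exp s + D) ^ Cl)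
      ((Cl : ℝ) * (Real.exp s₀ + D) ^ (Cl - 1) * Real.exp s₀) s₀ :=
    ((Real.hasDerivAt_exp s₀).add_const D).pow Cl
  have hne : (Real.exp s₀ + D) ^ Cl ≠ 0 := pow_ne_zero _ hEpos.ne'
  have h3 := (h1.div h2 hne).const_mul K
  have hfun2 : (fun s => K * Real.exp (s * a t + c) / (Real.exp s + D) ^ Cl) =
      fun s => K * (Real.exp (s * a t + c) / (Real.exp s + D) ^ Cl) := by
    funext s; ring
  rw [hfun, hfun2]
  convert h3 using 1
  case e'_4 => rfl
  case e'_5 => rfl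
  case e'_8 => rfl
  have hval : layerProb Cl ml a β = K * Real.exp (s₀ * a t + c) / (Real.exp s₀ + D) ^ Cl := by
    have := congrFun hfun s₀
    rwa [Function.update_eq_self] at this
  have hsumβ : (∑ j, Real.exp (β j)) = Real.exp s₀ + D := by
    have := hsum s₀
    rwa [Function.update_eq_self] at this
  rw [hval, hsumβ]
  have hpow : (Cl : ℝ) * (Real.exp s₀ + D) ^ (Cl - 1) * (Real.exp s₀ + D)
      = (Cl : ℝ) * (Real.exp s₀ + D) ^ Cl := by
    cases Cl with
    | zero => simp
    | succ n => rw [Nat.succ_sub_one]; ring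
  have hpow' : (Cl : ℝ) * (Real.exp s₀ + D) ^ (Cl - 1) = (Cl : ℝ) * (Real.exp s₀ + D) ^ Cl / (Real.exp s₀ + D) := by
    rw [← hpow]; field_simp
  rw [hpow']
  field_simp

/-- Let `A` be the finite set of all network configurations and
`J(α) = ∑ a ∈ A, p(a | α) · ℒ(a)` the expected loss. Then the partial derivative
of `J` with respect to coordinate `α ℓ t` exists and equals
`∑ a ∈ A, ℒ(a) · (a ℓ t − C ℓ · p ℓ t (α ℓ)) · p(a | α)`. -/
theorem expectedLoss_hasDerivAt (L : ℕ) (hL : 1 ≤ L) (C m : Fin L → ℕ)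
    (hm : ∀ ℓ, 1 ≤ m ℓ)
    (A : Finset ((ℓ : Fin L) → Fin (m ℓ) → ℕ))
    (hA : ∀ a, a ∈ A ↔ ∀ ℓ, ∑ k, a ℓ k = C ℓ)
    (Loss : ((ℓ : Fin L) → Fin (m ℓ) → ℕ) → ℝ)
    (ℓ : Fin L) (t : Fin (m ℓ)) (α : (ℓ : Fin L) → Fin (m ℓ) → ℝ) :
    HasDerivAt (fun s : ℝ =>
      ∑ a ∈ A, netProb L C m a (Function.update α ℓ (Function.update (α ℓ) t s)) * Loss a)
      (∑ a ∈ A, Loss a *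
        ((a ℓ t : ℝ) - (C ℓ : ℝ) * (Real.exp (α ℓ t) / ∑ j, Real.exp (α ℓ j))) *
        netProb L C m a α)
      (α ℓ t) := by
  apply HasDerivAt.fun_sum
  intro a _
  set P : ℝ := ∏ r ∈ univ.erase ℓ, layerProb (C r) (m r) (a r) (α r) with hP
  have hnet : ∀ β : Fin (m ℓ) → ℝ, netProb L C m a (Function.update α ℓ β) =
      layerProb (C ℓ) (m ℓ) (a ℓ) β * P := by
    intro β
    rw [netProb, ← Finset.mul_prod_erase _ _ (mem_univ ℓ), Function.update_self]
    congr 1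
    exact Finset.prod_congr rfl fun r hr => by
      rw [Function.update_of_ne (Finset.ne_of_mem_erase hr)]
  have hnetα : netProb L C m a α = layerProb (C ℓ) (m ℓ) (a ℓ) (α ℓ) * P := by
    have := hnet (α ℓ)
    rwa [Function.update_eq_self] at this
  have h := ((layerProb_hasDerivAt (C ℓ) (m ℓ) (a ℓ) (α ℓ) t).mul_const P).mul_const (Loss a)
  convert h using 1
  case e'_4 => rfl
  · funext s; rw [hnet]
  · rw [hnetα]; ring
end

section
/- Under the hypotheses of the multinomial expected-loss setting (L layers, configurations A, loss ℒ : A → ℝ, probabilities p(a | α) given by products of softmax-parameterized multinomials, J(α) = ∑_{a ∈ A} p(a | α) · ℒ(a)), for every layer ℓ, index t, and parameters α, the expectation over a random configuration a distributed according to p(· | α) of the quantity ℒ(a) · (a_{ℓ,t} − C_ℓ · p_{ℓ,t}(α_ℓ)) equals the partial derivative of J with respect to α_{ℓ,t}; that is, the single-sample gradient estimator ℒ(a) · (a_{ℓ,t} − C_ℓ · p_{ℓ,t}(α_ℓ)) is an unbiased estimator of ∂J/∂α_{ℓ,t}. -/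
open Finset

lemma layer_hasDerivAt (Cl ml : ℕ) (a : Fin ml → ℕ) (αl : Fin ml → ℝ) (t : Fin ml) :
    HasDerivAt (fun s => layerProb Cl ml a (Function.update αl t s))
      (layerProb Cl ml a αl *
        ((a t : ℝ) - (Cl : ℝ) * (Real.exp (αl t) / ∑ j, Real.exp (αl j)))) (αl t) := by
  set K : ℝ := (Cl.factorial : ℝ) / ∏ k, ((a k).factorial : ℝ) with hK
  set c : ℝ := ∑ k ∈ univ.erase t, αl k * (a k : ℝ) with hc
  set S' : ℝ := ∑ j ∈ univ.erase t, Real.exp (αl j) with hS'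
  have hS'0 : 0 ≤ S' := Finset.sum_nonneg fun j _ => (Real.exp_pos _).le
  have h1 : ∀ s : ℝ, ∑ k, Function.update αl t s k * (a k : ℝ) = s * a t + c := by
    intro s
    rw [← Finset.add_sum_erase _ _ (mem_univ t), Function.update_self]
    congr 1
    exact Finset.sum_congr rfl fun k hk => by
      rw [Function.update_of_ne (Finset.ne_of_mem_erase hk)]
  have h2 : ∀ s : ℝ, ∑ j, Real.exp (Function.update αl t s j) = Real.exp s + S' := by
    intro s
    rw [← Finset.add_sum_erase _ _ (mem_univ t), Function.update_self]
    congr 1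
    exact Finset.sum_congr rfl fun k hk => by
      rw [Function.update_of_ne (Finset.ne_of_mem_erase hk)]
  have hfun : (fun s => layerProb Cl ml a (Function.update αl t s))
      = fun s => K * Real.exp (s * a t + c) / (Real.exp s + S') ^ Cl := by
    funext s; simp only [layerProb, h1, h2, hK]
  have hP : (0:ℝ) < Real.exp (αl t) + S' := lt_of_lt_of_le (Real.exp_pos _) (le_add_of_nonneg_right hS'0)
  have hPne : Real.exp (αl t) + S' ≠ 0 := ne_of_gt hP
  have hgne : (Real.exp (αl t) + S') ^ Cl ≠ 0 := pow_ne_zero _ hPne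
  have hf : HasDerivAt (fun s : ℝ => Real.exp (s * a t + c))
      (Real.exp (αl t * a t + c) * (a t : ℝ)) (αl t) := by
    simpa using (((hasDerivAt_id (αl t)).mul_const (a t : ℝ)).add_const c).exp
  have hg : HasDerivAt (fun s : ℝ => (Real.exp s + S') ^ Cl)
      ((Cl : ℝ) * (Real.exp (αl t) + S') ^ (Cl - 1) * Real.exp (αl t)) (αl t) :=
    ((Real.hasDerivAt_exp _).add_const S').pow Cl
  have hd := (hf.const_mul K).div hg hgne
  rw [hfun]
  refine hd.congr_deriv ?_
  have hsum : (∑ j, Real.exp (αl j)) = Real.exp (αl t) + S' := by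
    have := h2 (αl t); rwa [Function.update_eq_self] at this
  have hsum2 : (∑ k, αl k * (a k : ℝ)) = αl t * a t + c := by
    have := h1 (αl t); rwa [Function.update_eq_self] at this
  have hkey : (Cl : ℝ) * (Real.exp (αl t) + S') ^ (Cl - 1)
      = (Cl : ℝ) * (Real.exp (αl t) + S') ^ Cl / (Real.exp (αl t) + S') := by
    cases Cl with
    | zero => simp
    | succ n =>
      simp only [Nat.succ_sub_one, pow_succ]
      field_simp
  have hlp : layerProb Cl ml a αl
      = K * Real.exp (αl t * a t + c) / (Real.exp (αl t) + S') ^ Cl := by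
    have := congrFun hfun (αl t)
    simpa [Function.update_eq_self] using this
  rw [hsum, hlp, hkey]
  clear hK
  clear_value K
  field_simp

lemma net_hasDerivAt (L : ℕ) (C m : Fin L → ℕ)
    (a : (ℓ : Fin L) → Fin (m ℓ) → ℕ) (α : (ℓ : Fin L) → Fin (m ℓ) → ℝ)
    (ℓ : Fin L) (t : Fin (m ℓ)) :
    HasDerivAt (fun s => netProb L C m a (Function.update α ℓ (Function.update (α ℓ) t s)))
      (netProb L C m a α *
        ((a ℓ t : ℝ) - (C ℓ : ℝ) * (Real.exp (α ℓ t) / ∑ j, Real.exp (α ℓ j)))) (α ℓ t) := by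
  set Q : ℝ := ∏ r ∈ univ.erase ℓ, layerProb (C r) (m r) (a r) (α r) with hQ
  have hfun : (fun s => netProb L C m a (Function.update α ℓ (Function.update (α ℓ) t s)))
      = fun s => Q * layerProb (C ℓ) (m ℓ) (a ℓ) (Function.update (α ℓ) t s) := by
    funext s
    unfold netProb
    rw [← Finset.prod_erase_mul _ _ (mem_univ ℓ), Function.update_self]
    congr 1
    exact Finset.prod_congr rfl fun r hr => by
      rw [Function.update_of_ne (Finset.ne_of_mem_erase hr)]
  have hnet : netProb L C m a α = Q * layerProb (C ℓ) (m ℓ) (a ℓ) (α ℓ) := by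
    unfold netProb
    rw [← Finset.prod_erase_mul _ _ (mem_univ ℓ)]
  rw [hfun, hnet]
  have := (layer_hasDerivAt (C ℓ) (m ℓ) (a ℓ) (α ℓ) t).const_mul Q
  refine this.congr_deriv ?_
  ring

/-- The expectation, over a random configuration `a ~ p(· | α)`, of the
single-sample gradient estimator `ℒ(a) · (a ℓ t − C ℓ · p ℓ t (α ℓ))` equals the
partial derivative of the expected loss `J(α) = ∑ a ∈ A, p(a | α) · ℒ(a)` with respect
to `α ℓ t`; i.e., the estimator is unbiased. -/
theorem gradient_estimator_unbiased (L : ℕ) (hL : 1 ≤ L) (C m : Fin L → ℕ)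
    (hm : ∀ ℓ, 1 ≤ m ℓ)
    (A : Finset ((ℓ : Fin L) → Fin (m ℓ) → ℕ))
    (hA : ∀ a, a ∈ A ↔ ∀ ℓ, ∑ k, a ℓ k = C ℓ)
    (Loss : ((ℓ : Fin L) → Fin (m ℓ) → ℕ) → ℝ)
    (ℓ : Fin L) (t : Fin (m ℓ)) (α : (ℓ : Fin L) → Fin (m ℓ) → ℝ) :
    HasDerivAt (fun s : ℝ =>
      ∑ a ∈ A, netProb L C m a (Function.update α ℓ (Function.update (α ℓ) t s)) * Loss a)
      (∑ a ∈ A, netProb L C m a α *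
        (Loss a *
          ((a ℓ t : ℝ) - (C ℓ : ℝ) * (Real.exp (α ℓ t) / ∑ j, Real.exp (α ℓ j)))))
      (α ℓ t) := by
  apply HasDerivAt.fun_sum
  intro a _
  have := (net_hasDerivAt L C m a α ℓ t).mul_const (Loss a)
  refine this.congr_deriv ?_
  ring
end

section
/- Let L ≥ 1, and for each ℓ ∈ Fin L let C_ℓ ≥ 1. Let A be the finite set of all network configurations a = (a_1, …, a_L) with each a_ℓ a natural number satisfying a_ℓ ≤ C_ℓ − 1. Let ℒ : A → ℝ be an arbitrary loss function. For parameters α : Fin L → ℝ define p(a | α) = ∏_{ℓ} Binom(C_ℓ−1, a_ℓ) · exp(α_ℓ · a_ℓ) / (exp(α_ℓ) + 1)^{C_ℓ−1} and J(α) = ∑_{a ∈ A} p(a | α) · ℒ(a). Then for every layer ℓ and every α, the partial derivative of J with respect to α_ℓ exists and equals ∑_{a ∈ A} ℒ(a) · (a_ℓ − (C_ℓ−1) · p_ℓ(α_ℓ)) · p(a | α), where p_ℓ(α_ℓ) = exp(α_ℓ) / (exp(α_ℓ) + 1). -/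
open Finset

/-- The binomial probability of sampling `a` filters in a layer with `Cl` filters,
parameterized via the sigmoid `p(α) = exp α / (exp α + 1)`. -/
noncomputable def binomialLayerProb (Cl : ℕ) (a : ℕ) (α : ℝ) : ℝ :=
  (((Cl - 1).factorial : ℝ) / ((a.factorial : ℝ) * (((Cl - 1) - a).factorial : ℝ))) *
    Real.exp (α * a) / (Real.exp α + 1) ^ (Cl - 1)

/-- The network configuration probability: the product of the layer probabilities. -/
noncomputable def binomialNetProb (L : ℕ) (C : Fin L → ℕ) (a : Fin L → ℕ)
    (α : Fin L → ℝ) : ℝ :=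
  ∏ r, binomialLayerProb (C r) (a r) (α r)

lemma hasDerivAt_aux (B : ℝ) (n a : ℕ) (α : ℝ) :
    HasDerivAt (fun s : ℝ => B * Real.exp (s * a) / (Real.exp s + 1) ^ n)
      (((a : ℝ) - (n : ℝ) * (Real.exp α / (Real.exp α + 1))) *
        (B * Real.exp (α * a) / (Real.exp α + 1) ^ n)) α := by
  have hpos : (0:ℝ) < Real.exp α + 1 := by positivity
  have h1 : (Real.exp α + 1) ≠ 0 := ne_of_gt hpos
  have hne : ((Real.exp α + 1) ^ n) ≠ 0 := by positivity
  have hg : HasDerivAt (fun s : ℝ => B * Real.exp (s * a))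
      (B * (Real.exp (α * a) * a)) α := ((hasDerivAt_mul_const (a:ℝ)).exp).const_mul B
  have hh : HasDerivAt (fun s : ℝ => (Real.exp s + 1) ^ n)
      ((n : ℝ) * (Real.exp α + 1) ^ (n - 1) * Real.exp α) α :=
    ((Real.hasDerivAt_exp α).add_const 1).pow n
  have h := hg.fun_div hh hne
  convert h using 1
  · rfl
  · rfl
  rcases n with _ | m
  · simp; ring
  · simp only [Nat.add_sub_cancel, Nat.cast_add, Nat.cast_one, pow_succ]
    field_simp

lemma hasDerivAt_binomialLayerProb (Cl a : ℕ) (α : ℝ) :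
    HasDerivAt (fun s => binomialLayerProb Cl a s)
      (((a : ℝ) - ((Cl - 1 : ℕ) : ℝ) * (Real.exp α / (Real.exp α + 1))) *
        binomialLayerProb Cl a α) α :=
  hasDerivAt_aux _ (Cl - 1) a α

/-- Let `A` be the finite set of all network configurations
(`a ℓ ≤ C ℓ − 1` for every layer) and `J(α) = ∑ a ∈ A, p(a | α) · ℒ(a)` the
expected loss. The partial derivative of `J` with respect to `α ℓ` exists and equals
`∑ a ∈ A, ℒ(a) · (a ℓ − (C ℓ − 1) · p ℓ (α ℓ)) · p(a | α)`. -/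
theorem binomial_expectedLoss_hasDerivAt (L : ℕ) (hL : 1 ≤ L) (C : Fin L → ℕ)
    (hC : ∀ ℓ, 1 ≤ C ℓ)
    (A : Finset (Fin L → ℕ))
    (hA : ∀ a : Fin L → ℕ, a ∈ A ↔ ∀ ℓ, a ℓ ≤ C ℓ - 1)
    (Loss : (Fin L → ℕ) → ℝ)
    (ℓ : Fin L) (α : Fin L → ℝ) :
    HasDerivAt (fun s : ℝ =>
      ∑ a ∈ A, binomialNetProb L C a (Function.update α ℓ s) * Loss a)
      (∑ a ∈ A, Loss a *
        ((a ℓ : ℝ) - ((C ℓ - 1 : ℕ) : ℝ) * (Real.exp (α ℓ) / (Real.exp (α ℓ) + 1))) *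
        binomialNetProb L C a α)
      (α ℓ) := by
  apply HasDerivAt.fun_sum
  intro a _
  set K : ℝ := ∏ r ∈ univ.erase ℓ, binomialLayerProb (C r) (a r) (α r) with hK
  have hsplit : ∀ s : ℝ, binomialNetProb L C a (Function.update α ℓ s) =
      binomialLayerProb (C ℓ) (a ℓ) s * K := by
    intro s
    rw [binomialNetProb, ← Finset.mul_prod_erase _ _ (Finset.mem_univ ℓ)]
    simp only [Function.update_self]
    congr 1
    exact Finset.prod_congr rfl fun r hr => by
      rw [Function.update_of_ne (Finset.ne_of_mem_erase hr)]
  have hα : binomialNetProb L C a α = binomialLayerProb (C ℓ) (a ℓ) (α ℓ) * K := by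
    rw [binomialNetProb, ← Finset.mul_prod_erase _ _ (Finset.mem_univ ℓ)]
  have h := (((hasDerivAt_binomialLayerProb (C ℓ) (a ℓ) (α ℓ)).mul_const K).mul_const
    (Loss a))
  convert h using 1
  · rfl
  · funext s; rw [hsplit s]
  · rw [hα]; ring
end

section
/- Under the hypotheses of the binomial expected-loss setting (L layers, finite configuration set A, loss ℒ : A → ℝ, probabilities p(a | α) given by products of sigmoid-parameterized binomials, J(α) = ∑_{a ∈ A} p(a | α) · ℒ(a)), for every layer ℓ and parameters α, the expectation over a random configuration a distributed according to p(· | α) of the quantity ℒ(a) · (a_ℓ − (C_ℓ−1) · p_ℓ(α_ℓ)) equals the partial derivative of J with respect to α_ℓ; that is, this quantity is an unbiased single-sample estimator of ∂J/∂α_ℓ. -/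
open Finset

lemma aux_hasDerivAt (c : ℝ) (n k : ℕ) (x : ℝ) :
    HasDerivAt (fun s : ℝ => c * Real.exp (s * k) / (Real.exp s + 1) ^ n)
      (c * Real.exp (x * k) / (Real.exp x + 1) ^ n *
        ((k : ℝ) - (n : ℝ) * (Real.exp x / (Real.exp x + 1)))) x := by
  have he : ∀ s : ℝ, Real.exp s + 1 ≠ 0 := fun s => by positivity
  have h1 : HasDerivAt (fun s : ℝ => Real.exp (s * k)) (Real.exp (x * k) * (1 * k)) x :=
    ((hasDerivAt_id x).mul_const (k : ℝ)).exp
  have h2 : HasDerivAt (fun s : ℝ => (Real.exp s + 1) ^ n)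
      ((n : ℝ) * (Real.exp x + 1) ^ (n - 1) * Real.exp x) x := by
    simpa using (((Real.hasDerivAt_exp x).add_const 1).fun_pow n)
  have h3 := (h1.const_mul c).fun_div h2 (pow_ne_zero _ (he x))
  refine HasDerivAt.congr_deriv h3 (Eq.symm ?_)
  rcases n with _ | m
  · simp; ring
  · have hpow : (Real.exp x + 1) ^ (m + 1) = (Real.exp x + 1) ^ m * (Real.exp x + 1) :=
      pow_succ _ _
    simp only [Nat.add_sub_cancel, hpow]
    field_simp

lemma layer_hasDerivAt_s9 (Cl k : ℕ) (x : ℝ) :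
    HasDerivAt (fun s : ℝ => binomialLayerProb Cl k s)
      (binomialLayerProb Cl k x *
        ((k : ℝ) - ((Cl - 1 : ℕ) : ℝ) * (Real.exp x / (Real.exp x + 1)))) x := by
  simpa [binomialLayerProb] using
    aux_hasDerivAt (((Cl - 1).factorial : ℝ) /
      ((k.factorial : ℝ) * (((Cl - 1) - k).factorial : ℝ))) (Cl - 1) k x

/-- The expectation, over a random configuration `a ~ p(· | α)`, of the
single-sample gradient estimator `ℒ(a) · (a ℓ − (C ℓ − 1) · p ℓ (α ℓ))` equals the
partial derivative of the expected loss `J(α) = ∑ a ∈ A, p(a | α) · ℒ(a)` with respect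
to `α ℓ`; i.e., the estimator is unbiased. -/
theorem binomial_gradient_estimator_unbiased (L : ℕ) (hL : 1 ≤ L) (C : Fin L → ℕ)
    (hC : ∀ ℓ, 1 ≤ C ℓ)
    (A : Finset (Fin L → ℕ))
    (hA : ∀ a : Fin L → ℕ, a ∈ A ↔ ∀ ℓ, a ℓ ≤ C ℓ - 1)
    (Loss : (Fin L → ℕ) → ℝ)
    (ℓ : Fin L) (α : Fin L → ℝ) :
    HasDerivAt (fun s : ℝ =>
      ∑ a ∈ A, binomialNetProb L C a (Function.update α ℓ s) * Loss a)
      (∑ a ∈ A, binomialNetProb L C a α *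
        (Loss a *
          ((a ℓ : ℝ) - ((C ℓ - 1 : ℕ) : ℝ) * (Real.exp (α ℓ) / (Real.exp (α ℓ) + 1)))))
      (α ℓ) := by
  apply HasDerivAt.fun_sum
  intro a _
  have hsplit : ∀ β : Fin L → ℝ,
      binomialNetProb L C a β =
        binomialLayerProb (C ℓ) (a ℓ) (β ℓ) *
          ∏ r ∈ univ.erase ℓ, binomialLayerProb (C r) (a r) (β r) := by
    intro β
    rw [binomialNetProb, ← Finset.mul_prod_erase univ _ (mem_univ ℓ)]
  have hupd : ∀ s : ℝ,
      binomialNetProb L C a (Function.update α ℓ s) =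
        binomialLayerProb (C ℓ) (a ℓ) s *
          ∏ r ∈ univ.erase ℓ, binomialLayerProb (C r) (a r) (α r) := by
    intro s
    rw [hsplit, Function.update_self]
    congr 1
    apply Finset.prod_congr rfl
    intro r hr
    rw [Function.update_of_ne (Finset.ne_of_mem_erase hr)]
  set K : ℝ := (∏ r ∈ univ.erase ℓ, binomialLayerProb (C r) (a r) (α r)) * Loss a with hK
  have h := (layer_hasDerivAt_s9 (C ℓ) (a ℓ) (α ℓ)).mul_const K
  have heq : (fun s : ℝ => binomialNetProb L C a (Function.update α ℓ s) * Loss a) =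
      fun s : ℝ => binomialLayerProb (C ℓ) (a ℓ) s * K := by
    funext s; rw [hupd]; ring
  rw [heq]
  refine HasDerivAt.congr_deriv h (Eq.symm ?_)
  rw [hsplit α, hK]
  ring
end
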